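/- Let φ : ℝ → ℝ be strictly convex twice differentiable with φ' > 0 on [x₁, xₙ], and data x₁ ≤ … ≤ xₙ not all equal. Then there exists a candidate right population minimizer μ ∈ [x̄, x̄_φ) satisfying (x̄ - μ) + (φ̄ - φ(μ))φ'(μ) = 0, where x̄_φ := φ⁻¹(φ̄) ∈ [x̄, xₙ]. -/
import Mathlib


open Finset

/-- Existence of a candidate right population minimizer for the total Bregman divergence
when `φ' > 0` on the data range: there is `μ ∈ [x̄, x̄_φ)` satisfying the orthogonality
condition, where `x̄_φ = φ⁻¹(φ̄) ∈ [x̄, xₙ]` is the `φ`-mean. -/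
theorem candidate_minimizer_exists_pos_slope {n : ℕ}
    (φ : ℝ → ℝ)
    (hconv : StrictConvexOn ℝ Set.univ φ)
    (hsmooth : ContDiff ℝ 2 φ)
    (xs : Fin (n + 1) → ℝ) (hmono : Monotone xs)
    (hne : ∃ i j, xs i ≠ xs j)
    (hpos : ∀ y ∈ Set.Icc (xs 0) (xs (Fin.last n)), 0 < deriv φ y)
    (xbar phibar : ℝ)
    (hxbar : xbar = (1 / (n + 1) : ℝ) * ∑ i, xs i)
    (hphibar : phibar = (1 / (n + 1) : ℝ) * ∑ i, φ (xs i)) :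
    ∃ xφ μ : ℝ, φ xφ = phibar ∧ xφ ∈ Set.Icc xbar (xs (Fin.last n)) ∧
      μ ∈ Set.Ico xbar xφ ∧
      (xbar - μ) + (phibar - φ μ) * deriv φ μ = 0 := by
  set a := xs 0 with ha
  set b := xs (Fin.last n) with hb
  have hcont : Continuous φ := hsmooth.continuous
  have hcd : Continuous (deriv φ) := hsmooth.continuous_deriv one_le_two
  have hnpos : (0 : ℝ) < (n + 1 : ℝ) := by positivity
  have hwpos : (0 : ℝ) < 1 / (n + 1 : ℝ) := by positivity
  have hbound : ∀ i : Fin (n + 1), xs i ∈ Set.Icc a b := fun i =>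
    ⟨hmono (Fin.zero_le i), hmono (Fin.le_last i)⟩
  have hab : a < b := by
    rcases hne with ⟨i, j, hij⟩
    rcases lt_or_eq_of_le (hmono (Fin.zero_le (Fin.last n)) : a ≤ b) with h | h
    · exact h
    · exfalso; apply hij
      have h1 : xs i ≤ xs 0 := le_of_le_of_eq (hbound i).2 h.symm
      have h2 : xs j ≤ xs 0 := le_of_le_of_eq (hbound j).2 h.symm
      exact le_antisymm (h1.trans (hbound j).1) (h2.trans (hbound i).1)
  -- strict monotonicity of φ on [a, b]
  have hmonoφ : StrictMonoOn φ (Set.Icc a b) := by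
    apply strictMonoOn_of_deriv_pos (convex_Icc a b) hcont.continuousOn
    intro y hy
    rw [interior_Icc] at hy
    exact hpos y ⟨hy.1.le, hy.2.le⟩
  have hsum1 : ∑ _i : Fin (n + 1), (1 / (n + 1 : ℝ)) = 1 := by
    simp [Finset.sum_const, Finset.card_univ]
    field_simp
  -- xbar ∈ Icc a b
  have hxbar_mem : xbar ∈ Set.Icc a b := by
    constructor
    · rw [hxbar]
      have : (n + 1 : ℝ) * a ≤ ∑ i, xs i := by
        calc (n + 1 : ℝ) * a = ∑ _i : Fin (n + 1), a := by
              simp [Finset.sum_const, Finset.card_univ, mul_comm]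
          _ ≤ ∑ i, xs i := Finset.sum_le_sum fun i _ => (hbound i).1
      calc a = (1 / (n + 1 : ℝ)) * ((n + 1) * a) := by field_simp
        _ ≤ (1 / (n + 1 : ℝ)) * ∑ i, xs i := by
            exact mul_le_mul_of_nonneg_left this hwpos.le
    · rw [hxbar]
      have : ∑ i, xs i ≤ (n + 1 : ℝ) * b := by
        calc ∑ i, xs i ≤ ∑ _i : Fin (n + 1), b :=
              Finset.sum_le_sum fun i _ => (hbound i).2
          _ = (n + 1 : ℝ) * b := by
              simp [Finset.sum_const, Finset.card_univ, mul_comm]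
      calc (1 / (n + 1 : ℝ)) * ∑ i, xs i ≤ (1 / (n + 1 : ℝ)) * ((n + 1) * b) :=
            mul_le_mul_of_nonneg_left this hwpos.le
        _ = b := by field_simp
  -- strict Jensen: φ xbar < phibar
  have hJ : φ xbar < phibar := by
    rcases hne with ⟨i, j, hij⟩
    have := hconv.map_sum_lt (t := Finset.univ) (w := fun _ => 1 / (n + 1 : ℝ))
      (p := xs) (fun i _ => hwpos) hsum1 (fun i _ => Set.mem_univ _)
      ⟨i, Finset.mem_univ i, j, Finset.mem_univ j, hij⟩
    simpa [hxbar, hphibar, Finset.mul_sum, smul_eq_mul] using this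
  -- phibar < φ b
  have hPb : phibar < φ b := by
    have hstrict : φ a < φ b := hmonoφ ⟨le_refl a, hab.le⟩ ⟨hab.le, le_refl b⟩ hab
    have hsumlt : ∑ i, φ (xs i) < (n + 1 : ℝ) * φ b := by
      have : ∑ i, φ (xs i) < ∑ _i : Fin (n + 1), φ b := by
        apply Finset.sum_lt_sum
        · intro i _
          exact (hmonoφ.monotoneOn (hbound i) ⟨hab.le, le_refl b⟩ (hbound i).2)
        · exact ⟨0, Finset.mem_univ 0, hstrict⟩
      simpa [Finset.sum_const, Finset.card_univ, mul_comm] using this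
    rw [hphibar]
    calc (1 / (n + 1 : ℝ)) * ∑ i, φ (xs i) < (1 / (n + 1 : ℝ)) * ((n + 1) * φ b) :=
          (mul_lt_mul_iff_right₀ hwpos).2 hsumlt
      _ = φ b := by field_simp
  -- IVT: find xφ ∈ Ioo xbar b with φ xφ = phibar
  have hxbarb : xbar ≤ b := hxbar_mem.2
  have h0 : phibar ∈ Set.Ioo (φ xbar) (φ b) := ⟨hJ, hPb⟩
  obtain ⟨xφ, hxφ_mem, hxφ⟩ := intermediate_value_Ioo hxbarb hcont.continuousOn h0
  -- define F and apply IVT again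
  set F : ℝ → ℝ := fun μ => (xbar - μ) + (phibar - φ μ) * deriv φ μ with hF
  have hFcont : Continuous F := by
    apply Continuous.add (by continuity)
    exact ((continuous_const.sub hcont).mul hcd)
  have hFxbar : 0 < F xbar := by
    have hd : 0 < deriv φ xbar := hpos xbar hxbar_mem
    have : F xbar = (phibar - φ xbar) * deriv φ xbar := by simp [hF]
    rw [this]
    exact mul_pos (by linarith) hd
  have hFxφ : F xφ < 0 := by
    have : F xφ = xbar - xφ := by simp [hF, hxφ]
    rw [this]
    linarith [hxφ_mem.1]
  obtain ⟨μ, hμ_mem, hμ⟩ := intermediate_value_Ioo' hxφ_mem.1.le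
    hFcont.continuousOn (Set.mem_Ioo.2 ⟨hFxφ, hFxbar⟩)
  exact ⟨xφ, μ, hxφ, ⟨hxφ_mem.1.le, hxφ_mem.2.le⟩, ⟨hμ_mem.1.le, hμ_mem.2⟩, hμ⟩
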